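/- (Norm invariance of the t-SVDM factorization.) Let M₃,…,M_p be invertible with each M_k = c_k W_k, c_k ≠ 0 and W_k orthogonal. If U ∈ ℝ^{n₁×n₁×n₃×⋯×n_p} and V ∈ ℝ^{n₂×n₂×n₃×⋯×n_p} are ⋆M-orthogonal and S ∈ ℝ^{n₁×n₂×n₃×⋯×n_p} is any tensor, then ‖U ⋆M S ⋆M Vᵀ‖_F = ‖S‖_F. -/
import Mathlib


open Matrix

/-!
Order-`p` real tensors (`p = q + 2`) are represented as families of frontal
slices: a tensor `A ∈ ℝ^{n₁ × n₂ × n₃ × ⋯ × n_p}` is a function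
`A : TI m → Matrix (Fin n₁) (Fin n₂) ℝ`, where `TI m = ∀ k : Fin q, Fin (m k)`
is the trailing multi-index `(i₃, …, i_p)` and `A i` is the frontal slice
`A(:,:,i₃,…,i_p)`.
-/

namespace TSVDM

variable {q : ℕ} {m : Fin q → ℕ}

/-- Trailing multi-index `(i₃, …, i_p)`. -/
abbrev TI (m : Fin q → ℕ) : Type := ∀ k, Fin (m k)

/-- Transform-domain tensor `Â = A ×₃ M₃ ×₄ M₄ ⋯ ×_p M_p`
(mode-`k` products along all trailing modes). -/
noncomputable def hat (M : ∀ k, Matrix (Fin (m k)) (Fin (m k)) ℝ) {a b : Type}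
    (A : TI m → Matrix a b ℝ) : TI m → Matrix a b ℝ :=
  fun i => ∑ j : TI m, (∏ k, M k (i k) (j k)) • A j

/-- Inverse transform `×₃ M₃⁻¹ ×₄ M₄⁻¹ ⋯ ×_p M_p⁻¹`. -/
noncomputable def unhat (M : ∀ k, Matrix (Fin (m k)) (Fin (m k)) ℝ) {a b : Type}
    (A : TI m → Matrix a b ℝ) : TI m → Matrix a b ℝ :=
  fun i => ∑ j : TI m, (∏ k, (M k)⁻¹ (i k) (j k)) • A j

/-- The `⋆M`-product: `A ⋆M B = (Â △ B̂) ×₃ M₃⁻¹ ⋯ ×_p M_p⁻¹`, where `△` is the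
facewise product (slice-wise matrix multiplication). -/
noncomputable def starM (M : ∀ k, Matrix (Fin (m k)) (Fin (m k)) ℝ)
    {a b c : Type} [Fintype b]
    (A : TI m → Matrix a b ℝ) (B : TI m → Matrix b c ℝ) : TI m → Matrix a c ℝ :=
  unhat M (fun i => hat M A i * hat M B i)

/-- The `⋆M`-transpose: transpose every transform-domain frontal slice. -/
noncomputable def transM (M : ∀ k, Matrix (Fin (m k)) (Fin (m k)) ℝ) {a b : Type}
    (A : TI m → Matrix a b ℝ) : TI m → Matrix b a ℝ :=
  unhat M (fun i => (hat M A i)ᵀ)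

/-- The `⋆M`-identity: all transform-domain frontal slices equal the identity matrix. -/
noncomputable def idM (M : ∀ k, Matrix (Fin (m k)) (Fin (m k)) ℝ)
    (a : Type) [DecidableEq a] : TI m → Matrix a a ℝ :=
  unhat M (fun _ => (1 : Matrix a a ℝ))

/-- `Q` is `⋆M`-orthogonal if `Qᵀ ⋆M Q = Q ⋆M Qᵀ = I`. -/
def IsStarMOrthogonal (M : ∀ k, Matrix (Fin (m k)) (Fin (m k)) ℝ)
    {a : Type} [Fintype a] [DecidableEq a] (Q : TI m → Matrix a a ℝ) : Prop :=
  starM M (transM M Q) Q = idM M a ∧ starM M Q (transM M Q) = idM M a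

/-- Frobenius norm of a tensor. -/
noncomputable def frob {a b : Type} [Fintype a] [Fintype b]
    (A : TI m → Matrix a b ℝ) : ℝ :=
  Real.sqrt (∑ i : TI m, ∑ r : a, ∑ c : b, A i r c ^ 2)

/-- Diagonal position `(j, j)`: row index. -/
def dIdx₁ {n₁ n₂ : ℕ} (j : Fin (min n₁ n₂)) : Fin n₁ :=
  ⟨j.1, lt_of_lt_of_le j.2 (Nat.min_le_left n₁ n₂)⟩

/-- Diagonal position `(j, j)`: column index. -/
def dIdx₂ {n₁ n₂ : ℕ} (j : Fin (min n₁ n₂)) : Fin n₂ :=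
  ⟨j.1, lt_of_lt_of_le j.2 (Nat.min_le_right n₁ n₂)⟩

/-- `A = U ⋆M S ⋆M Vᵀ` is a t-SVDM of `A`: `U`, `V` are `⋆M`-orthogonal, `S` is
f-diagonal (each transform-domain frontal slice is diagonal), and the diagonal
entries of each frontal slice of `Ŝ` are nonnegative and in descending order. -/
structure IsTSVDM (M : ∀ k, Matrix (Fin (m k)) (Fin (m k)) ℝ) {n₁ n₂ : ℕ}
    (A : TI m → Matrix (Fin n₁) (Fin n₂) ℝ)
    (U : TI m → Matrix (Fin n₁) (Fin n₁) ℝ)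
    (S : TI m → Matrix (Fin n₁) (Fin n₂) ℝ)
    (V : TI m → Matrix (Fin n₂) (Fin n₂) ℝ) : Prop where
  decomp : A = starM M (starM M U S) (transM M V)
  orthU : IsStarMOrthogonal M U
  orthV : IsStarMOrthogonal M V
  fdiag : ∀ (i : TI m) (a : Fin n₁) (b : Fin n₂), (a : ℕ) ≠ (b : ℕ) → hat M S i a b = 0
  nonneg : ∀ (i : TI m) (j : Fin (min n₁ n₂)), 0 ≤ hat M S i (dIdx₁ j) (dIdx₂ j)
  descend : ∀ (i : TI m) (j j' : Fin (min n₁ n₂)), j ≤ j' →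
    hat M S i (dIdx₁ j') (dIdx₂ j') ≤ hat M S i (dIdx₁ j) (dIdx₂ j)

/-- The `(j,j)`-singular tube of `S`, as a function of the trailing multi-index. -/
def tube {n₁ n₂ : ℕ} (S : TI m → Matrix (Fin n₁) (Fin n₂) ℝ)
    (j : Fin (min n₁ n₂)) : TI m → ℝ :=
  fun i => S i (dIdx₁ j) (dIdx₂ j)

/-- Frobenius norm of the `(j,j)`-singular tube of `S`. -/
noncomputable def tubeNorm {n₁ n₂ : ℕ} (S : TI m → Matrix (Fin n₁) (Fin n₂) ℝ)
    (j : Fin (min n₁ n₂)) : ℝ :=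
  Real.sqrt (∑ i : TI m, tube S j i ^ 2)

/-- `r` is the t-rank: the number of nonzero singular tubes (tubes `s₁,…,s_r`
are nonzero and the remaining ones vanish). -/
def HasTRank {n₁ n₂ : ℕ} (S : TI m → Matrix (Fin n₁) (Fin n₂) ℝ) (r : ℕ) : Prop :=
  ∀ j : Fin (min n₁ n₂), ((j : ℕ) < r ↔ tube S j ≠ 0)

/-- Keep only the first `k` lateral slices (columns of each frontal slice). -/
def truncCols {n k : ℕ} (hk : k ≤ n) {a : Type}
    (U : TI m → Matrix a (Fin n) ℝ) : TI m → Matrix a (Fin k) ℝ :=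
  fun i => Matrix.of fun r c => U i r (Fin.castLE hk c)

/-- Keep only the leading `k × k` block of each frontal slice. -/
def truncBlock {n₁ n₂ k : ℕ} (h₁ : k ≤ n₁) (h₂ : k ≤ n₂)
    (S : TI m → Matrix (Fin n₁) (Fin n₂) ℝ) : TI m → Matrix (Fin k) (Fin k) ℝ :=
  fun i => Matrix.of fun a b => S i (Fin.castLE h₁ a) (Fin.castLE h₂ b)

/-- The t-rank-`k` truncation `A_k = U_k ⋆M S_k ⋆M V_kᵀ`. -/
noncomputable def truncApprox (M : ∀ k, Matrix (Fin (m k)) (Fin (m k)) ℝ)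
    {n₁ n₂ : ℕ} (U : TI m → Matrix (Fin n₁) (Fin n₁) ℝ)
    (S : TI m → Matrix (Fin n₁) (Fin n₂) ℝ)
    (V : TI m → Matrix (Fin n₂) (Fin n₂) ℝ) (k : ℕ) (hk : k ≤ min n₁ n₂) :
    TI m → Matrix (Fin n₁) (Fin n₂) ℝ :=
  starM M
    (starM M (truncCols (le_trans hk (Nat.min_le_left _ _)) U)
      (truncBlock (le_trans hk (Nat.min_le_left _ _)) (le_trans hk (Nat.min_le_right _ _)) S))
    (transM M (truncCols (le_trans hk (Nat.min_le_right _ _)) V))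

/-- The `j`-th lateral slice `A(:,j,:,…,:)`, as an `n₁ × 1 × n₃ × ⋯ × n_p` tensor. -/
def lateral {n₁ n₂ : ℕ} (A : TI m → Matrix (Fin n₁) (Fin n₂) ℝ) (j : Fin n₂) :
    TI m → Matrix (Fin n₁) (Fin 1) ℝ :=
  fun i => Matrix.of fun r _ => A i r j

/-- The `(j,j)`-singular tube of `S` regarded as a `1 × 1 × n₃ × ⋯ × n_p` tensor. -/
def tubeT {n₁ n₂ : ℕ} (S : TI m → Matrix (Fin n₁) (Fin n₂) ℝ)
    (j : Fin (min n₁ n₂)) : TI m → Matrix (Fin 1) (Fin 1) ℝ :=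
  fun i => Matrix.of fun _ _ => S i (dIdx₁ j) (dIdx₂ j)


section Aux

variable (M : ∀ k, Matrix (Fin (m k)) (Fin (m k)) ℝ)

lemma prod_ite_eq_ite (j l : TI m) :
    (∏ k, (if j k = l k then (1 : ℝ) else 0)) = if j = l then 1 else 0 := by
  by_cases h : j = l
  · simp [h]
  · obtain ⟨k, hk⟩ : ∃ k, j k ≠ l k := by
      by_contra hh; push_neg at hh; exact h (funext hh)
    rw [if_neg h]
    exact Finset.prod_eq_zero (Finset.mem_univ k) (by simp [hk])

lemma hat_unhat (hMr : ∀ k, M k * (M k)⁻¹ = 1) {a b : Type}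
    (A : TI m → Matrix a b ℝ) : hat M (unhat M A) = A := by
  funext i
  simp only [hat, unhat, Finset.smul_sum, smul_smul]
  rw [Finset.sum_comm]
  have key : ∀ l : TI m,
      (∑ j : TI m, ((∏ k, M k (i k) (j k)) * ∏ k, (M k)⁻¹ (j k) (l k)) • A l)
        = (if i = l then (1 : ℝ) else 0) • A l := by
    intro l
    rw [← Finset.sum_smul]
    congr 1
    calc ∑ j : TI m, (∏ k, M k (i k) (j k)) * ∏ k, (M k)⁻¹ (j k) (l k)
        = ∑ j : TI m, ∏ k, (M k (i k) (j k) * (M k)⁻¹ (j k) (l k)) := by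
          simp [Finset.prod_mul_distrib]
      _ = ∏ k, ∑ x, M k (i k) x * (M k)⁻¹ x (l k) :=
          (Fintype.prod_sum fun k x => M k (i k) x * (M k)⁻¹ x (l k)).symm
      _ = ∏ k, (M k * (M k)⁻¹) (i k) (l k) := by
          simp [Matrix.mul_apply]
      _ = ∏ k, ((1 : Matrix (Fin (m k)) (Fin (m k)) ℝ) (i k) (l k)) := by
          simp only [hMr]
      _ = if i = l then 1 else 0 := by
          simp only [Matrix.one_apply]
          exact prod_ite_eq_ite i l
  simp only [key, ite_smul, one_smul, zero_smul, Finset.sum_ite_eq, Finset.mem_univ,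
    if_true]

lemma sum_sq_transform (c : Fin q → ℝ) (W : ∀ k, Matrix (Fin (m k)) (Fin (m k)) ℝ)
    (hW : ∀ k, W k * (W k)ᵀ = 1 ∧ (W k)ᵀ * W k = 1)
    (hM : ∀ k, M k = c k • W k) (x : TI m → ℝ) :
    ∑ i : TI m, (∑ j : TI m, (∏ k, M k (i k) (j k)) * x j) ^ 2
      = (∏ k, (c k) ^ 2) * ∑ j : TI m, (x j) ^ 2 := by
  have iso : ∀ j l : TI m,
      (∑ i : TI m, (∏ k, M k (i k) (j k)) * ∏ k, M k (i k) (l k))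
        = (∏ k, (c k) ^ 2) * if j = l then 1 else 0 := by
    intro j l
    calc ∑ i : TI m, (∏ k, M k (i k) (j k)) * ∏ k, M k (i k) (l k)
        = ∑ i : TI m, ∏ k, (M k (i k) (j k) * M k (i k) (l k)) := by
          simp [Finset.prod_mul_distrib]
      _ = ∏ k, ∑ y, M k y (j k) * M k y (l k) :=
          (Fintype.prod_sum fun k y => M k y (j k) * M k y (l k)).symm
      _ = ∏ k, ((M k)ᵀ * M k) (j k) (l k) := by
          simp [Matrix.mul_apply, Matrix.transpose_apply]
      _ = ∏ k, ((c k) ^ 2 * if j k = l k then 1 else 0) := by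
          refine Finset.prod_congr rfl fun k _ => ?_
          rw [hM k, Matrix.transpose_smul, Matrix.smul_mul, Matrix.mul_smul,
            (hW k).2, smul_smul]
          simp [Matrix.one_apply, sq]
      _ = (∏ k, (c k) ^ 2) * if j = l then 1 else 0 := by
          rw [Finset.prod_mul_distrib, prod_ite_eq_ite]
  calc ∑ i : TI m, (∑ j : TI m, (∏ k, M k (i k) (j k)) * x j) ^ 2
      = ∑ i : TI m, ∑ j : TI m, ∑ l : TI m,
          ((∏ k, M k (i k) (j k)) * x j) * ((∏ k, M k (i k) (l k)) * x l) := by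
        refine Finset.sum_congr rfl fun i _ => ?_
        rw [sq, Finset.sum_mul_sum]
    _ = ∑ j : TI m, ∑ l : TI m,
          (∑ i : TI m, (∏ k, M k (i k) (j k)) * ∏ k, M k (i k) (l k)) * (x j * x l) := by
        rw [Finset.sum_comm]
        refine Finset.sum_congr rfl fun j _ => ?_
        rw [Finset.sum_comm]
        refine Finset.sum_congr rfl fun l _ => ?_
        rw [Finset.sum_mul]
        exact Finset.sum_congr rfl fun i _ => by ring
    _ = ∑ j : TI m, (∏ k, (c k) ^ 2) * (x j * x j) := by
        refine Finset.sum_congr rfl fun j _ => ?_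
        simp only [iso, ite_mul, one_mul, zero_mul, mul_ite, mul_zero, mul_one]
        simp [Finset.sum_ite_eq, Finset.mem_univ]
    _ = (∏ k, (c k) ^ 2) * ∑ j : TI m, (x j) ^ 2 := by
        rw [Finset.mul_sum]
        exact Finset.sum_congr rfl fun j _ => by ring

lemma hat_apply {a b : Type} (A : TI m → Matrix a b ℝ) (i : TI m) (r : a) (cc : b) :
    hat M A i r cc = ∑ j : TI m, (∏ k, M k (i k) (j k)) * A j r cc := by
  simp [hat, Matrix.sum_apply]

lemma sum_sq_hat (c : Fin q → ℝ) (W : ∀ k, Matrix (Fin (m k)) (Fin (m k)) ℝ)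
    (hW : ∀ k, W k * (W k)ᵀ = 1 ∧ (W k)ᵀ * W k = 1)
    (hM : ∀ k, M k = c k • W k) {a b : Type} [Fintype a] [Fintype b]
    (A : TI m → Matrix a b ℝ) :
    ∑ i : TI m, ∑ r : a, ∑ cc : b, (hat M A i r cc) ^ 2
      = (∏ k, (c k) ^ 2) * ∑ i : TI m, ∑ r : a, ∑ cc : b, (A i r cc) ^ 2 := by
  rw [Finset.sum_comm]
  conv_rhs => rw [Finset.sum_comm]
  rw [Finset.mul_sum]
  refine Finset.sum_congr rfl fun r _ => ?_
  rw [Finset.sum_comm]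
  conv_rhs => rw [Finset.sum_comm]
  rw [Finset.mul_sum]
  refine Finset.sum_congr rfl fun cc _ => ?_
  simp only [hat_apply]
  exact sum_sq_transform M c W hW hM (fun j => A j r cc)

lemma sum_sq_eq_trace {a b : Type} [Fintype a] [Fintype b] (X : Matrix a b ℝ) :
    ∑ r : a, ∑ cc : b, X r cc ^ 2 = Matrix.trace (Xᵀ * X) := by
  rw [Finset.sum_comm]
  simp [Matrix.trace, Matrix.mul_apply, Matrix.diag, sq]

end Aux

/-- (Norm invariance of the t-SVDM factorization.)
If `U` and `V` are `⋆M`-orthogonal then `‖U ⋆M S ⋆M Vᵀ‖_F = ‖S‖_F`. -/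
theorem frob_starM_orthogonal_eq {q : ℕ} {m : Fin q → ℕ}
    (M : ∀ k, Matrix (Fin (m k)) (Fin (m k)) ℝ)
    (c : Fin q → ℝ) (W : ∀ k, Matrix (Fin (m k)) (Fin (m k)) ℝ)
    (hc : ∀ k, c k ≠ 0)
    (hW : ∀ k, W k * (W k)ᵀ = 1 ∧ (W k)ᵀ * W k = 1)
    (hM : ∀ k, M k = c k • W k)
    {n₁ n₂ : ℕ} (U : TI m → Matrix (Fin n₁) (Fin n₁) ℝ)
    (V : TI m → Matrix (Fin n₂) (Fin n₂) ℝ)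
    (hU : IsStarMOrthogonal M U) (hV : IsStarMOrthogonal M V)
    (S : TI m → Matrix (Fin n₁) (Fin n₂) ℝ) :
    frob (starM M (starM M U S) (transM M V)) = frob S := by
  -- inverse of M k
  have hMinv : ∀ k, (M k)⁻¹ = (c k)⁻¹ • (W k)ᵀ := by
    intro k
    refine Matrix.inv_eq_right_inv ?_
    rw [hM k, Matrix.smul_mul, Matrix.mul_smul, smul_smul, (hW k).1,
      mul_inv_cancel₀ (hc k), one_smul]
  have hMr : ∀ k, M k * (M k)⁻¹ = 1 := by
    intro k
    rw [hMinv k, hM k, Matrix.smul_mul, Matrix.mul_smul, smul_smul, (hW k).1,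
      mul_inv_cancel₀ (hc k), one_smul]
  -- hat of the structured operations
  have hat_starM : ∀ {a b cc : Type} [Fintype b] (A : TI m → Matrix a b ℝ)
      (B : TI m → Matrix b cc ℝ),
      hat M (starM M A B) = fun i => hat M A i * hat M B i := by
    intro a b cc _ A B
    exact hat_unhat M hMr _
  have hat_transM : ∀ {a b : Type} (A : TI m → Matrix a b ℝ),
      hat M (transM M A) = fun i => (hat M A i)ᵀ := by
    intro a b A
    exact hat_unhat M hMr _
  have hat_idM : ∀ (a : Type) [DecidableEq a],
      hat M (idM M a) = fun _ => (1 : Matrix a a ℝ) := by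
    intro a _
    exact hat_unhat M hMr _
  -- orthogonality in the transform domain
  have hUo : ∀ i, (hat M U i)ᵀ * hat M U i = 1 := by
    intro i
    have h := congrFun (congrArg (hat M) hU.1) i
    rw [hat_starM, hat_idM] at h
    rw [hat_transM] at h
    exact h
  have hVo : ∀ i, (hat M V i)ᵀ * hat M V i = 1 := by
    intro i
    have h := congrFun (congrArg (hat M) hV.1) i
    rw [hat_starM, hat_idM] at h
    rw [hat_transM] at h
    exact h
  set T := starM M (starM M U S) (transM M V) with hT
  have hhatT : ∀ i, hat M T i = hat M U i * hat M S i * (hat M V i)ᵀ := by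
    intro i
    rw [hT, hat_starM, hat_starM, hat_transM]
  -- slice-wise norm invariance
  have hslice : ∀ i, ∑ r : Fin n₁, ∑ cc : Fin n₂, (hat M T i r cc) ^ 2
      = ∑ r : Fin n₁, ∑ cc : Fin n₂, (hat M S i r cc) ^ 2 := by
    intro i
    rw [sum_sq_eq_trace, sum_sq_eq_trace, hhatT i]
    set A := hat M U i
    set B := hat M S i
    set C := hat M V i
    have h1 : (A * B * Cᵀ)ᵀ * (A * B * Cᵀ) = C * ((Bᵀ * B) * Cᵀ) := by
      simp only [Matrix.transpose_mul, Matrix.transpose_transpose, Matrix.mul_assoc]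
      rw [← Matrix.mul_assoc Aᵀ A, hUo i, Matrix.one_mul]
    rw [h1, Matrix.trace_mul_comm, Matrix.mul_assoc, Matrix.mul_assoc,
      hVo i, Matrix.mul_one]
  -- put it together
  have hγ : (∏ k, (c k) ^ 2) ≠ 0 := by
    refine Finset.prod_ne_zero_iff.2 fun k _ => ?_
    exact pow_ne_zero 2 (hc k)
  have hTsum : ∑ i : TI m, ∑ r : Fin n₁, ∑ cc : Fin n₂, (T i r cc) ^ 2
      = ∑ i : TI m, ∑ r : Fin n₁, ∑ cc : Fin n₂, (S i r cc) ^ 2 := by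
    have e1 := sum_sq_hat M c W hW hM T
    have e2 := sum_sq_hat M c W hW hM S
    have e3 : ∑ i : TI m, ∑ r : Fin n₁, ∑ cc : Fin n₂, (hat M T i r cc) ^ 2
        = ∑ i : TI m, ∑ r : Fin n₁, ∑ cc : Fin n₂, (hat M S i r cc) ^ 2 :=
      Finset.sum_congr rfl fun i _ => hslice i
    have := e1.symm.trans (e3.trans e2)
    exact mul_left_cancel₀ hγ this
  unfold frob
  rw [hTsum]

end TSVDM
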